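/- Let R be a commutative ring. The Tate-continuous R-linear endomorphisms of V = R((t)) form a subring E of the ring of all R-linear endomorphisms of V (E contains the identity and is closed under addition, negation and composition), the bounded Tate-continuous endomorphisms form a two-sided ideal I⁺ of E, and the discrete Tate-continuous endomorphisms form a two-sided ideal I⁻ of E. -/

import Mathlib

open HahnSeries

variable (R : Type*) [CommRing R]

/-- The standard lattice `L n ⊆ R((t))`: Laurent series whose coefficients vanish in
all degrees `< n`.  In particular `L 0 = R[[t]]`. -/
def standardLattice (n : ℤ) : Submodule R (LaurentSeries R) where
  carrier := {f | ∀ m : ℤ, m < n → f.coeff m = 0}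
  add_mem' := by
    intro a b ha hb m hm
    simp [HahnSeries.coeff_add, ha m hm, hb m hm]
  zero_mem' := by intro m hm; simp
  smul_mem' := by
    intro c a ha m hm
    simp [HahnSeries.coeff_smul, ha m hm]

/-- An `R`-linear endomorphism of `R((t))` is Tate-continuous if
(a) every standard lattice is mapped into some standard lattice, and
(b) for every standard lattice `L m` there is a standard lattice `L n` mapped into it. -/
def IsTateContinuous (φ : Module.End R (LaurentSeries R)) : Prop :=
  (∀ n : ℤ, ∃ m : ℤ, ∀ v ∈ standardLattice R n, φ v ∈ standardLattice R m) ∧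
  (∀ m : ℤ, ∃ n : ℤ, ∀ v ∈ standardLattice R n, φ v ∈ standardLattice R m)

/-- An endomorphism of `R((t))` is bounded if its range is contained in a standard lattice. -/
def IsBoundedEndo (φ : Module.End R (LaurentSeries R)) : Prop :=
  ∃ m : ℤ, ∀ v : LaurentSeries R, φ v ∈ standardLattice R m

/-- An endomorphism of `R((t))` is discrete if it vanishes on some standard lattice. -/
def IsDiscreteEndo (φ : Module.End R (LaurentSeries R)) : Prop :=
  ∃ n : ℤ, ∀ v ∈ standardLattice R n, φ v = 0

/-- The Tate-continuous `R`-linear endomorphisms of `R((t))` form a subring `E` of the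
endomorphism ring of `R((t))`; the bounded Tate-continuous endomorphisms form a two-sided
ideal `I⁺` of `E`, and the discrete Tate-continuous endomorphisms form a two-sided ideal
`I⁻` of `E`. -/
lemma standardLattice_anti {m n : ℤ} (h : m ≤ n) {v : LaurentSeries R}
    (hv : v ∈ standardLattice R n) : v ∈ standardLattice R m := by
  intro k hk; exact hv k (lt_of_lt_of_le hk h)

def tateSubring : Subring (Module.End R (LaurentSeries R)) where
  carrier := {φ | IsTateContinuous R φ}
  one_mem' := ⟨fun n => ⟨n, fun v hv => hv⟩, fun m => ⟨m, fun v hv => hv⟩⟩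
  mul_mem' := by
    rintro φ ψ ⟨hφa, hφb⟩ ⟨hψa, hψb⟩
    constructor
    · intro n
      obtain ⟨m, hm⟩ := hψa n
      obtain ⟨k, hk⟩ := hφa m
      exact ⟨k, fun v hv => hk _ (hm v hv)⟩
    · intro m
      obtain ⟨n, hn⟩ := hφb m
      obtain ⟨n', hn'⟩ := hψb n
      exact ⟨n', fun v hv => hn _ (hn' v hv)⟩
  add_mem' := by
    rintro φ ψ ⟨hφa, hφb⟩ ⟨hψa, hψb⟩
    constructor
    · intro n
      obtain ⟨m1, h1⟩ := hφa n
      obtain ⟨m2, h2⟩ := hψa n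
      refine ⟨min m1 m2, fun v hv => ?_⟩
      exact Submodule.add_mem _
        (standardLattice_anti R (min_le_left _ _) (h1 v hv))
        (standardLattice_anti R (min_le_right _ _) (h2 v hv))
    · intro m
      obtain ⟨n1, h1⟩ := hφb m
      obtain ⟨n2, h2⟩ := hψb m
      refine ⟨max n1 n2, fun v hv => ?_⟩
      exact Submodule.add_mem _
        (h1 v (standardLattice_anti R (le_max_left _ _) hv))
        (h2 v (standardLattice_anti R (le_max_right _ _) hv))
  zero_mem' := ⟨fun n => ⟨0, fun v _ => (standardLattice R 0).zero_mem⟩,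
    fun m => ⟨0, fun v _ => (standardLattice R m).zero_mem⟩⟩
  neg_mem' := by
    rintro φ ⟨hφa, hφb⟩
    refine ⟨fun n => ?_, fun m => ?_⟩
    · obtain ⟨m, hm⟩ := hφa n
      exact ⟨m, fun v hv => (standardLattice R m).neg_mem (hm v hv)⟩
    · obtain ⟨n, hn⟩ := hφb m
      exact ⟨n, fun v hv => (standardLattice R m).neg_mem (hn v hv)⟩

theorem tateContinuous_subring_bounded_discrete_ideals :
    ∃ E : Subring (Module.End R (LaurentSeries R)),
      (∀ φ : Module.End R (LaurentSeries R), φ ∈ E ↔ IsTateContinuous R φ) ∧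
      (∃ Iplus : TwoSidedIdeal E, ∀ φ : E,
        φ ∈ Iplus ↔ IsBoundedEndo R (φ : Module.End R (LaurentSeries R))) ∧
      (∃ Iminus : TwoSidedIdeal E, ∀ φ : E,
        φ ∈ Iminus ↔ IsDiscreteEndo R (φ : Module.End R (LaurentSeries R))) := by
  refine ⟨tateSubring R, fun φ => Iff.rfl, ?_, ?_⟩
  · refine ⟨TwoSidedIdeal.mk' {φ | IsBoundedEndo R (φ : Module.End R (LaurentSeries R))}
      ⟨0, fun v => (standardLattice R 0).zero_mem⟩ ?_ ?_ ?_ ?_, fun φ => TwoSidedIdeal.mem_mk' _ _ _ _ _ _ _⟩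
    · rintro x y ⟨m1, h1⟩ ⟨m2, h2⟩
      refine ⟨min m1 m2, fun v => ?_⟩
      exact Submodule.add_mem _
        (standardLattice_anti R (min_le_left _ _) (h1 v))
        (standardLattice_anti R (min_le_right _ _) (h2 v))
    · rintro x ⟨m, hm⟩
      exact ⟨m, fun v => (standardLattice R m).neg_mem (hm v)⟩
    · rintro x y ⟨m, hm⟩
      obtain ⟨k, hk⟩ := x.2.1 m
      exact ⟨k, fun v => hk _ (hm v)⟩
    · rintro x y ⟨m, hm⟩
      exact ⟨m, fun v => hm _⟩
  · refine ⟨TwoSidedIdeal.mk' {φ | IsDiscreteEndo R (φ : Module.End R (LaurentSeries R))}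
      ⟨0, fun v _ => rfl⟩ ?_ ?_ ?_ ?_, fun φ => TwoSidedIdeal.mem_mk' _ _ _ _ _ _ _⟩
    · rintro x y ⟨n1, h1⟩ ⟨n2, h2⟩
      refine ⟨max n1 n2, fun v hv => ?_⟩
      have e1 := h1 v (standardLattice_anti R (le_max_left _ _) hv)
      have e2 := h2 v (standardLattice_anti R (le_max_right _ _) hv)
      show (x : Module.End R (LaurentSeries R)) v + (y : Module.End R (LaurentSeries R)) v = 0
      rw [e1, e2, add_zero]
    · rintro x ⟨n, hn⟩
      refine ⟨n, fun v hv => ?_⟩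
      show -((x : Module.End R (LaurentSeries R)) v) = 0
      rw [hn v hv, neg_zero]
    · rintro x y ⟨n, hn⟩
      refine ⟨n, fun v hv => ?_⟩
      show (x : Module.End R (LaurentSeries R)) ((y : Module.End R (LaurentSeries R)) v) = 0
      rw [hn v hv, map_zero]
    · rintro x y ⟨n, hn⟩
      obtain ⟨n', hn'⟩ := y.2.2 n
      refine ⟨n', fun v hv => ?_⟩
      show (x : Module.End R (LaurentSeries R)) ((y : Module.End R (LaurentSeries R)) v) = 0
      exact hn _ (hn' v hv)
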